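/- If Γ_a is a congruence relation on a multi-agent system M (in particular reflexive and closed under: q Γ_a r, (q,q') ∈ δ, (r,r') ∈ δ, and equal Π_a-observations of q', r' imply q' Γ_a r'), then for all states s, r: s Γ_a r if and only if there exist runs ρ ending in s and ρ' ending in r with ρ ∼_a ρ'. -/

import Mathlib

/-- If the relation `Γₐ` of a MAS `M` (every run ending in the first state has
an a-indistinguishable run ending in the second) is a congruence (reflexive and closed under:
`q Γₐ r`, `(q,q') ∈ δ`, `(r,r') ∈ δ`, and equal `Πₐ`-observations of `q'`, `r'` imply
`q' Γₐ r'`), and all states are reachable, then `s Γₐ r` iff there exist runs `ρ` ending in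
`s` and `ρ'` ending in `r` with `ρ ∼ₐ ρ'`. -/
theorem stmt17 {Q P : Type*} (δ : Q → Q → Prop) (q0 : Q) (lab : Q → Set P) (Pa : Set P) :
    let obsRun : List Q → List (Set P) := fun ρ => (q0 :: ρ).map (fun q => lab q ∩ Pa)
    let endsIn : List Q → Q → Prop :=
      fun ρ q => (q0 :: ρ).getLast (List.cons_ne_nil _ _) = q
    let Gamma : Q → Q → Prop := fun q r =>
      ∀ ρ, List.Chain δ q0 ρ → endsIn ρ q →
        ∃ ρ', List.Chain δ q0 ρ' ∧ obsRun ρ = obsRun ρ' ∧ endsIn ρ' r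
    (∀ q : Q, ∃ ρ, List.Chain δ q0 ρ ∧ endsIn ρ q) →
    (∀ q, Gamma q q) →
    (∀ q r q' r', Gamma q r → δ q q' → δ r r' → lab q' ∩ Pa = lab r' ∩ Pa → Gamma q' r') →
    ∀ s r : Q, Gamma s r ↔
      ∃ ρ ρ', List.Chain δ q0 ρ ∧ List.Chain δ q0 ρ' ∧ endsIn ρ s ∧ endsIn ρ' r ∧
        obsRun ρ = obsRun ρ' := by
  intro obsRun endsIn Gamma hreach hrefl hcong s r
  constructor
  · intro hsr
    obtain ⟨ρ, hchain, hend⟩ := hreach s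
    obtain ⟨ρ', hchain', hobs, hend'⟩ := hsr ρ hchain hend
    exact ⟨ρ, ρ', hchain, hchain', hend, hend', hobs⟩
  · rintro ⟨ρ, ρ', hc, hc', he, he', hobs⟩
    -- key lemma by reverse induction
    have key : ∀ ρ : List Q, List.Chain δ q0 ρ → ∀ ρ' : List Q, List.Chain δ q0 ρ' →
        obsRun ρ = obsRun ρ' →
        Gamma ((q0 :: ρ).getLast (List.cons_ne_nil _ _))
              ((q0 :: ρ').getLast (List.cons_ne_nil _ _)) := by
      intro ρ
      induction ρ using List.reverseRecOn with
      | nil =>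
        intro _ ρ' hc' hobs
        have hlen : ρ'.length = 0 := by
          have := congrArg List.length hobs
          simpa [obsRun] using this.symm
        have : ρ' = [] := List.length_eq_zero_iff.mp hlen
        subst this
        simpa using hrefl q0
      | append_singleton σ s ih =>
        intro hc ρ' hc' hobs
        -- ρ' is nonempty
        have hlen : ρ'.length = σ.length + 1 := by
          have := congrArg List.length hobs
          simpa [obsRun, eq_comm] using this
        obtain ⟨σ', r, rfl⟩ : ∃ σ' r, ρ' = σ' ++ [r] := by
          rcases List.eq_nil_or_concat ρ' with h | ⟨σ', r, h⟩
          · simp [h] at hlen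
          · exact ⟨σ', r, by simpa [List.concat_eq_append] using h⟩
        -- split obs equality
        have hobs1 : obsRun σ = obsRun σ' ∧ lab s ∩ Pa = lab r ∩ Pa := by
          have h1 : obsRun σ ++ [lab s ∩ Pa] = obsRun σ' ++ [lab r ∩ Pa] := by
            simpa [obsRun] using hobs
          have hl : (obsRun σ).length = (obsRun σ').length := by
            have := congrArg List.length h1
            simpa using this
          have := List.append_inj h1 hl
          refine ⟨this.1, ?_⟩
          simpa using this.2
        -- split chains
        have hsplit : ∀ (τ : List Q) (x : Q), List.Chain δ q0 (τ ++ [x]) →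
            List.Chain δ q0 τ ∧ δ ((q0 :: τ).getLast (List.cons_ne_nil _ _)) x := by
          intro τ x h
          have h0 : List.Chain' δ (q0 :: (τ ++ [x])) := h
          have h' : List.Chain' δ ((q0 :: τ) ++ [x]) := by simpa using h0
          change List.IsChain δ ((q0 :: τ) ++ [x]) at h'
          rw [List.isChain_append] at h'
          have hR := h'.2.2 ((q0 :: τ).getLast (List.cons_ne_nil _ _)) ?_ x (by simp)
          · exact ⟨h'.1, hR⟩
          · simp [List.getLast?_eq_getLast]
        obtain ⟨hcσ, hδs⟩ := hsplit σ s hc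
        obtain ⟨hcσ', hδr⟩ := hsplit σ' r hc'
        have hG := hcong _ _ s r (ih hcσ σ' hcσ' hobs1.1) hδs hδr hobs1.2
        simp only [show q0 :: (σ ++ [s]) = (q0 :: σ) ++ [s] from rfl,
          show q0 :: (σ' ++ [r]) = (q0 :: σ') ++ [r] from rfl,
          List.getLast_append_singleton]
        exact hG
    have := key ρ hc ρ' hc' hobs
    rw [he, he'] at this
    exact this
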